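/- arXiv:1709.01146 — 4 statements merged into one kernel-verified Lean document; each statement's English description precedes it below -/
import Mathlib

section
/- Let p i denote the i-th prime number. For every fixed n ≥ 1, the counting function of the survivors of the first n stages of the hard Sieve of Eratosthenes has natural density ∏_{i=1}^{n} (1 − 1/(p i)); that is, (1/t) · #{m : ℕ | 1 ≤ m ∧ m ≤ t ∧ ∀ i, 1 ≤ i → i ≤ n → ¬ p i ∣ m} tends to ∏_{i=1}^{n} (1 − 1/(p i)) as t → ∞. -/
open Finset

private lemma count_blocks (P k q : ℕ) :
    #{x ∈ Finset.Ico k (k + q * P) | P.Coprime x} = q * P.totient := by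
  induction q with
  | zero => simp
  | succ q ih =>
    have hsplit : Finset.Ico k (k + (q + 1) * P) =
        Finset.Ico k (k + q * P) ∪ Finset.Ico (k + q * P) (k + q * P + P) := by
      rw [Finset.Ico_union_Ico_eq_Ico le_self_add (by ring_nf; omega)]
      ring_nf
    rw [hsplit, Finset.filter_union, Finset.card_union_of_disjoint, ih,
      Nat.filter_coprime_Ico_eq_totient]
    · ring
    · exact (Finset.Ico_disjoint_Ico_consecutive k _ _).mono
        (Finset.filter_subset _ _) (Finset.filter_subset _ _)

/-- The survivors of the first `n` stages of the hard Sieve of Eratosthenes have natural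
density `∏_{i=1}^{n} (1 - 1/(p i))`, where `p i` is the `i`-th prime. -/
theorem eratosthenes_survivors_density (n : ℕ) (hn : 1 ≤ n) :
    Filter.Tendsto
      (fun t : ℕ =>
        ((Set.ncard {m : ℕ | 1 ≤ m ∧ m ≤ t ∧
            ∀ i, 1 ≤ i → i ≤ n → ¬ Nat.nth Nat.Prime (i - 1) ∣ m} : ℝ) / t))
      Filter.atTop
      (nhds (∏ i ∈ Finset.Icc 1 n, (1 - 1 / (Nat.nth Nat.Prime (i - 1) : ℝ)))) := by
  set p : ℕ → ℕ := fun i => Nat.nth Nat.Prime (i - 1) with hpdef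
  have hp : ∀ i, (p i).Prime := fun i => Nat.prime_nth_prime _
  set P : ℕ := ∏ i ∈ Finset.Icc 1 n, p i with hPdef
  have hinj' : ∀ a ∈ Finset.Icc 1 n, ∀ b ∈ Finset.Icc 1 n, p a = p b → a = b := by
    intro a ha b hb hab
    rw [Finset.mem_Icc] at ha hb
    have := Nat.nth_injective Nat.infinite_setOf_prime hab
    omega
  have hPpos : 0 < P := Finset.prod_pos fun i _ => (hp i).pos
  -- characterize survivors as numbers coprime to P
  have key : ∀ m : ℕ, (∀ i, 1 ≤ i → i ≤ n → ¬ p i ∣ m) ↔ P.Coprime m := by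
    intro m
    constructor
    · intro h
      exact Nat.coprime_prod_left_iff.mpr fun i hi => by
        rw [Finset.mem_Icc] at hi
        exact (hp i).coprime_iff_not_dvd.mpr (h i hi.1 hi.2)
    · intro hc i h1 h2 hdvd
      have hPdvd : p i ∣ P := Finset.dvd_prod_of_mem _ (Finset.mem_Icc.mpr ⟨h1, h2⟩)
      have hd1 : p i ∣ Nat.gcd P m := Nat.dvd_gcd hPdvd hdvd
      rw [hc] at hd1
      exact (hp i).one_lt.not_ge (Nat.le_of_dvd one_pos hd1)
  -- the set as a finset
  have hset : ∀ t : ℕ, {m : ℕ | 1 ≤ m ∧ m ≤ t ∧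
      ∀ i, 1 ≤ i → i ≤ n → ¬ p i ∣ m} =
      ↑({m ∈ Finset.Icc 1 t | P.Coprime m}) := by
    intro t
    ext m
    simp only [Set.mem_setOf_eq, Finset.coe_filter, Finset.mem_Icc, key]
    tauto
  set c : ℕ → ℕ := fun t => #{m ∈ Finset.Icc 1 t | P.Coprime m} with hcdef
  have hcard : ∀ t : ℕ, (Set.ncard {m : ℕ | 1 ≤ m ∧ m ≤ t ∧
      ∀ i, 1 ≤ i → i ≤ n → ¬ p i ∣ m} : ℝ) = (c t : ℝ) := by
    intro t
    rw [hset t, Set.ncard_coe_finset]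
  -- counting bounds
  have hIcc : ∀ t : ℕ, Finset.Icc 1 t = Finset.Ico 1 (t + 1) := by
    intro t; ext x; simp [Nat.lt_succ_iff]
  have hltP : ∀ t : ℕ, t < (t / P + 1) * P := by
    intro t
    calc t = P * (t / P) + t % P := (Nat.div_add_mod t P).symm
      _ < P * (t / P) + P := Nat.add_lt_add_left (Nat.mod_lt t hPpos) _
      _ = (t / P + 1) * P := by ring
  have hlow : ∀ t : ℕ, (t / P) * P.totient ≤ c t := by
    intro t
    show (t / P) * P.totient ≤ #{m ∈ Finset.Icc 1 t | P.Coprime m}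
    rw [hIcc, ← count_blocks P 1 (t / P)]
    apply Finset.card_le_card
    apply Finset.filter_subset_filter
    apply Finset.Ico_subset_Ico_right
    have := Nat.div_mul_le_self t P
    omega
  have hhigh : ∀ t : ℕ, c t ≤ (t / P + 1) * P.totient := by
    intro t
    show #{m ∈ Finset.Icc 1 t | P.Coprime m} ≤ (t / P + 1) * P.totient
    rw [hIcc, ← count_blocks P 1 (t / P + 1)]
    apply Finset.card_le_card
    apply Finset.filter_subset_filter
    apply Finset.Ico_subset_Ico_right
    have := hltP t
    omega
  -- real limit
  have hφ : (0:ℝ) ≤ (P.totient : ℝ) := Nat.cast_nonneg _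
  have hPR : (0:ℝ) < (P:ℝ) := by exact_mod_cast hPpos
  have hlim : Filter.Tendsto (fun t : ℕ => (c t : ℝ) / t) Filter.atTop
      (nhds ((P.totient : ℝ) / P)) := by
    have hzero : Filter.Tendsto (fun t : ℕ => (P.totient : ℝ) / t) Filter.atTop (nhds 0) :=
      tendsto_const_div_atTop_nhds_zero_nat _
    have hg : Filter.Tendsto (fun t : ℕ => (P.totient : ℝ) / P - (P.totient : ℝ) / t)
        Filter.atTop (nhds ((P.totient : ℝ) / P)) := by
      simpa using (tendsto_const_nhds.sub hzero)
    have hh : Filter.Tendsto (fun t : ℕ => (P.totient : ℝ) / P + (P.totient : ℝ) / t)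
        Filter.atTop (nhds ((P.totient : ℝ) / P)) := by
      simpa using (tendsto_const_nhds.add hzero)
    apply tendsto_of_tendsto_of_tendsto_of_le_of_le' hg hh
    · filter_upwards [Filter.eventually_ge_atTop 1] with t ht
      have htR : (0:ℝ) < (t:ℝ) := by exact_mod_cast ht
      have h1 : ((t / P : ℕ) : ℝ) * P.totient ≤ (c t : ℝ) := by exact_mod_cast hlow t
      have h2 : (t:ℝ) / P - 1 ≤ ((t / P : ℕ) : ℝ) := by
        rw [sub_le_iff_le_add, div_le_iff₀ hPR]
        have h : (t:ℝ) < (((t / P : ℕ) : ℝ) + 1) * P := by exact_mod_cast hltP t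
        nlinarith
      rw [le_div_iff₀ htR]
      have hexp : ((P.totient : ℝ) / P - (P.totient : ℝ) / t) * t
          = ((t:ℝ) / P - 1) * P.totient := by
        field_simp
      rw [hexp]
      exact le_trans (mul_le_mul_of_nonneg_right h2 hφ) h1
    · filter_upwards [Filter.eventually_ge_atTop 1] with t ht
      have htR : (0:ℝ) < (t:ℝ) := by exact_mod_cast ht
      have h1 : (c t : ℝ) ≤ (((t / P : ℕ) : ℝ) + 1) * P.totient := by exact_mod_cast hhigh t
      have h2 : ((t / P : ℕ) : ℝ) ≤ (t:ℝ) / P := by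
        rw [le_div_iff₀ hPR]
        exact_mod_cast Nat.div_mul_le_self t P
      rw [div_le_iff₀ htR]
      have hexp : ((P.totient : ℝ) / P + (P.totient : ℝ) / t) * t
          = ((t:ℝ) / P + 1) * P.totient := by
        field_simp
      rw [hexp]
      exact le_trans h1 (mul_le_mul_of_nonneg_right (by linarith) hφ)
  -- totient formula
  have hformula : (P.totient : ℝ) / P = ∏ i ∈ Finset.Icc 1 n, (1 - 1 / (p i : ℝ)) := by
    have hQ := Nat.totient_eq_mul_prod_factors P
    have hPF : P.primeFactors = (Finset.Icc 1 n).image p :=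
      calc P.primeFactors = (∏ q ∈ (Finset.Icc 1 n).image p, q).primeFactors := by
            rw [Finset.prod_image hinj']
        _ = (Finset.Icc 1 n).image p := Nat.primeFactors_prod (fun q hq => by
            obtain ⟨i, _, rfl⟩ := Finset.mem_image.mp hq; exact hp i)
    have hR : (P.totient : ℝ) = P * ∏ q ∈ P.primeFactors, (1 - (q : ℝ)⁻¹) := by
      have h := congrArg (fun x : ℚ => (x : ℝ)) hQ
      push_cast at h
      simpa using h
    rw [hR, hPF, Finset.prod_image hinj', mul_div_cancel_left₀ _ (ne_of_gt hPR)]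
    exact Finset.prod_congr rfl fun i _ => by rw [one_div]
  have hfin : ∀ t : ℕ, (Set.ncard {m : ℕ | 1 ≤ m ∧ m ≤ t ∧
      ∀ i, 1 ≤ i → i ≤ n → ¬ Nat.nth Nat.Prime (i - 1) ∣ m} : ℝ) = (c t : ℝ) := hcard
  have hf2 : (P.totient : ℝ) / P =
      ∏ i ∈ Finset.Icc 1 n, (1 - 1 / (Nat.nth Nat.Prime (i - 1) : ℝ)) := hformula
  simp only [hfin]
  rw [← hf2]
  exact hlim
end

section
/- For every n ≥ 1 and every k : ℕ, f n (k + ∏_{i=1}^{n} (x i − 1)) = f n k + ∏_{i=1}^{n} (x i). That is, the set of survivors of the first n stages of the model sieve is periodic with period ∏_{i=1}^{n} x i, each period containing exactly ∏_{i=1}^{n} (x i − 1) survivors. -/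
/-- `gx x` is the 0-indexed strictly increasing enumeration of `{k : ℕ | k % x ≠ 1}`. -/
noncomputable def gx (x : ℕ) : ℕ → ℕ := Nat.nth (fun k => k % x ≠ 1)

/-- `modelF n` is the 0-indexed strictly increasing enumeration of the integers surviving
`n` stages of the model sieve:  `modelF 0 k = k + 1` and
`modelF (n+1) k = modelF n (gx (modelX (n+1)) k)` where `modelX (n+1) = modelF n 1`. -/
noncomputable def modelF : ℕ → ℕ → ℕ
  | 0, k => k + 1
  | n + 1, k => modelF n (gx (modelF n 1) k)

/-- `modelX n` is the `n`-th model prime (`modelX 1 = 2, modelX 2 = 3, modelX 3 = 5, ...`). -/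
noncomputable def modelX (n : ℕ) : ℕ := modelF (n - 1) 1

/-- `Lcount n t` is the number of survivors of the first `n` stages of the model sieve
that are `≤ t`. -/
noncomputable def Lcount (n t : ℕ) : ℕ := Set.ncard {k : ℕ | modelF n k ≤ t}


section ModelAux

/-- The survivor predicate of one sieve stage. -/
def px (x : ℕ) : ℕ → Prop := fun k => k % x ≠ 1

instance (x : ℕ) : DecidablePred (px x) := fun k => by unfold px; infer_instance

lemma px_infinite {x : ℕ} (hx : 2 ≤ x) : (setOf (px x)).Infinite := by
  apply Set.infinite_of_injective_forall_mem (f := fun n : ℕ => x * n)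
  · intro a b h
    exact Nat.eq_of_mul_eq_mul_left (by omega) h
  · intro n
    show px x (x * n)
    simp [px, Nat.mul_mod_right]

lemma px_count_x {x : ℕ} (hx : 2 ≤ x) : Nat.count (px x) x = x - 1 := by
  rw [Nat.count_eq_card_filter_range]
  have h : (Finset.range x).filter (px x) = (Finset.range x).erase 1 := by
    ext k
    simp only [Finset.mem_filter, Finset.mem_erase, Finset.mem_range, px]
    constructor
    · rintro ⟨hk, hk1⟩
      rw [Nat.mod_eq_of_lt hk] at hk1
      exact ⟨hk1, hk⟩
    · rintro ⟨hk1, hk⟩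
      rw [Nat.mod_eq_of_lt hk]
      exact ⟨hk, hk1⟩
  rw [h, Finset.card_erase_of_mem (by simp; omega), Finset.card_range]

lemma px_count_add {x : ℕ} (hx : 2 ≤ x) (m : ℕ) :
    Nat.count (px x) (m + x) = Nat.count (px x) m + (x - 1) := by
  induction m with
  | zero => simp [px_count_x hx]
  | succ m ih =>
      have hshift : px x (m + x) ↔ px x m := by
        simp [px, Nat.add_mod_right]
      have heq : m + 1 + x = (m + x) + 1 := by ring
      rw [heq, Nat.count_succ, ih, Nat.count_succ]
      by_cases hm : px x m
      · rw [if_pos hm, if_pos (hshift.mpr hm)]; ring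
      · rw [if_neg hm, if_neg (fun h => hm (hshift.mp h))]; ring

lemma gx_eq (x : ℕ) : gx x = Nat.nth (px x) := rfl

lemma gx_add {x : ℕ} (hx : 2 ≤ x) (k : ℕ) : gx x (k + (x - 1)) = gx x k + x := by
  rw [gx_eq]
  have hinf := px_infinite hx
  have hp : px x (Nat.nth (px x) k) := Nat.nth_mem_of_infinite hinf k
  have hp2 : px x (Nat.nth (px x) k + x) := by
    simpa [px, Nat.add_mod_right] using hp
  have hc : Nat.count (px x) (Nat.nth (px x) k + x) = k + (x - 1) := by
    rw [px_count_add hx, Nat.count_nth_of_infinite hinf]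
  have h := Nat.nth_count hp2
  rw [hc] at h
  exact h

lemma gx_add_mul {x : ℕ} (hx : 2 ≤ x) (k m : ℕ) :
    gx x (k + m * (x - 1)) = gx x k + m * x := by
  induction m with
  | zero => simp
  | succ m ih =>
      have heq : k + (m + 1) * (x - 1) = (k + m * (x - 1)) + (x - 1) := by ring
      rw [heq, gx_add hx, ih]; ring

lemma gx_zero {x : ℕ} (hx : 2 ≤ x) : gx x 0 = 0 := by
  rw [gx_eq, Nat.nth_zero]
  apply Nat.sInf_eq_zero.mpr
  left
  show px x 0
  simp only [px, Nat.zero_mod]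
  omega

lemma modelF_strictMono : ∀ n, StrictMono (modelF n) ∧ modelF n 0 = 1 := by
  intro n
  induction n with
  | zero =>
      constructor
      · intro a b h; simpa [modelF] using h
      · simp [modelF]
  | succ n ih =>
      obtain ⟨hsm, h0⟩ := ih
      have hx : 2 ≤ modelF n 1 := by
        have := hsm (show (0:ℕ) < 1 by norm_num)
        omega
      constructor
      · intro a b h
        exact hsm ((Nat.nth_strictMono (px_infinite hx)) h)
      · show modelF n (gx (modelF n 1) 0) = 1
        rw [gx_zero hx, h0]

lemma modelF_one_ge {n : ℕ} : 2 ≤ modelF n 1 := by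
  have h1 := (modelF_strictMono n).1 (show (0:ℕ) < 1 by norm_num)
  have h0 := (modelF_strictMono n).2
  omega

lemma model_periodic : ∀ n, 1 ≤ n → ∀ k,
    modelF n (k + ∏ i ∈ Finset.Icc 1 n, (modelX i - 1)) =
      modelF n k + ∏ i ∈ Finset.Icc 1 n, modelX i := by
  intro n hn
  induction n, hn using Nat.le_induction with
  | base =>
      intro k
      have h1 : (Finset.Icc 1 1) = {1} := rfl
      simp only [h1, Finset.prod_singleton]
      have hX : modelX 1 = 2 := rfl
      rw [hX]
      show modelF 0 (gx (modelF 0 1) (k + (2 - 1))) = modelF 0 (gx (modelF 0 1) k) + 2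
      have h2 : modelF 0 1 = 2 := rfl
      rw [h2, gx_add (le_refl 2) k]
      simp [modelF]
  | succ n hn ih =>
      have ihm : ∀ m k, modelF n (k + m * ∏ i ∈ Finset.Icc 1 n, (modelX i - 1)) =
          modelF n k + m * ∏ i ∈ Finset.Icc 1 n, modelX i := by
        intro m
        induction m with
        | zero => simp
        | succ m ihm =>
            intro k
            have h1 : k + (m + 1) * ∏ i ∈ Finset.Icc 1 n, (modelX i - 1)
                = (k + m * ∏ i ∈ Finset.Icc 1 n, (modelX i - 1))
                  + ∏ i ∈ Finset.Icc 1 n, (modelX i - 1) := by ring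
            rw [h1, ih _, ihm]; ring
      intro k
      set x' := modelF n 1 with hx'
      have hx2 : 2 ≤ x' := modelF_one_ge
      have hXn : modelX (n + 1) = x' := rfl
      rw [Finset.prod_Icc_succ_top (by omega), Finset.prod_Icc_succ_top (by omega), hXn]
      set A := ∏ i ∈ Finset.Icc 1 n, (modelX i - 1) with hA
      set B := ∏ i ∈ Finset.Icc 1 n, modelX i with hB
      show modelF n (gx x' (k + A * (x' - 1))) = modelF n (gx x' k) + B * x'
      calc modelF n (gx x' (k + A * (x' - 1)))
          = modelF n (gx x' k + A * x') := by rw [gx_add_mul hx2]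
        _ = modelF n (gx x' k + x' * A) := by rw [mul_comm A x']
        _ = modelF n (gx x' k) + x' * B := ihm x' _
        _ = modelF n (gx x' k) + B * x' := by rw [mul_comm x' B]

end ModelAux

/-- Periodicity of the model sieve: the survivors of the first `n` stages form a periodic
sequence with period `∏_{i=1}^{n} x i`, each period containing exactly
`∏_{i=1}^{n} (x i - 1)` survivors. -/
theorem model_sieve_periodic (n : ℕ) (hn : 1 ≤ n) (k : ℕ) :
    modelF n (k + ∏ i ∈ Finset.Icc 1 n, (modelX i - 1)) =
      modelF n k + ∏ i ∈ Finset.Icc 1 n, modelX i :=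
  model_periodic n hn k
end

section
/- For every n ≥ 1 and every i with 0 ≤ i ≤ x n − 1, the number of survivors of the first n stages of the model sieve that are ≤ x (n+i) equals 1 + i; that is, L n (x (n+i)) = 1 + i. (For i = 0 this says L n (x n) = 1, and for 1 ≤ i ≤ x n − 1 it says that the i-th survivor after 1 in stage n is x (n+i).) -/

lemma gx_infinite {x : ℕ} (hx : 2 ≤ x) : {k : ℕ | k % x ≠ 1}.Infinite := by
  have hinj : Function.Injective (fun k : ℕ => x * k) := fun a b h => by
    have : x ≠ 0 := by omega
    exact mul_left_cancel₀ this h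
  have hmem : ∀ a : ℕ, x * a ∈ {k : ℕ | k % x ≠ 1} := fun a => by
    simp [Nat.mul_mod_right]
  exact Set.infinite_of_injective_forall_mem hinj hmem

lemma count_aux {x : ℕ} (hx : 2 ≤ x) :
    ∀ i, 1 ≤ i → i ≤ x - 1 → Nat.count (fun k => k % x ≠ 1) (i + 1) = i := by
  intro i
  induction i with
  | zero => omega
  | succ i ih =>
    intro _ h
    rcases Nat.eq_zero_or_pos i with h0 | h1
    · subst h0
      rw [Nat.count_succ, Nat.count_succ, Nat.count_zero]
      have h1x : 1 % x = 1 := Nat.mod_eq_of_lt (by omega)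
      simp [h1x]
    · rw [Nat.count_succ, ih h1 (by omega)]
      have : (i + 1) % x = i + 1 := Nat.mod_eq_of_lt (by omega)
      simp [this]
      omega

lemma gx_eq_s6 {x : ℕ} (hx : 2 ≤ x) {i : ℕ} (h1 : 1 ≤ i) (h2 : i ≤ x - 1) :
    gx x i = i + 1 := by
  have hp : (fun k => k % x ≠ 1) (i + 1) := by
    have : (i + 1) % x ≠ 1 := by
      rcases Nat.lt_or_ge (i + 1) x with h | h
      · rw [Nat.mod_eq_of_lt h]; omega
      · have : i + 1 = x := by omega
        rw [this, Nat.mod_self]; omega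
    exact this
  have := Nat.nth_count (p := fun k => k % x ≠ 1) hp
  rw [count_aux hx i h1 h2] at this
  exact this

lemma gx_strictMono {x : ℕ} (hx : 2 ≤ x) : StrictMono (gx x) :=
  Nat.nth_strictMono (gx_infinite hx)

lemma modelF_props : ∀ n, StrictMono (modelF n) ∧ 2 ≤ modelF n 1 := by
  intro n
  induction n with
  | zero =>
    constructor
    · intro a b h; simpa [modelF] using h
    · simp [modelF]
  | succ n ih =>
    obtain ⟨hsm, h2⟩ := ih
    have hg : StrictMono (gx (modelF n 1)) := gx_strictMono h2
    have sm : StrictMono (modelF (n + 1)) := fun a b h => hsm (hg h)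
    refine ⟨sm, ?_⟩
    show 2 ≤ modelF n (gx (modelF n 1) 1)
    rw [gx_eq_s6 h2 le_rfl (by omega)]
    exact le_trans h2 (hsm (by norm_num)).le

lemma modelF_zero (n : ℕ) : modelF n 0 = 1 := by
  induction n with
  | zero => simp [modelF]
  | succ n ih =>
    show modelF n (gx (modelF n 1) 0) = 1
    rw [gx_zero (modelF_props n).2, ih]

lemma modelX_succ (m : ℕ) : modelX (m + 1) = modelF m 1 := by
  simp [modelX]

lemma modelX_succ_lt (m : ℕ) : modelX (m + 1) < modelX (m + 2) := by
  rw [modelX_succ, modelX_succ]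
  show modelF m 1 < modelF m (gx (modelF m 1) 1)
  have h2 := (modelF_props m).2
  rw [gx_eq_s6 h2 le_rfl (by omega)]
  exact (modelF_props m).1 (by norm_num)

lemma Lcount_eq {n j t : ℕ} (h1 : modelF n j ≤ t) (h2 : t < modelF n (j + 1)) :
    Lcount n t = j + 1 := by
  have hsm := (modelF_props n).1
  have hset : {k : ℕ | modelF n k ≤ t} = Set.Iic j := by
    ext k
    simp only [Set.mem_setOf_eq, Set.mem_Iic]
    constructor
    · intro h
      by_contra hk
      push_neg at hk
      have : modelF n (j + 1) ≤ modelF n k := hsm.le_iff_le.mpr (by omega)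
      omega
    · intro h
      exact le_trans (hsm.le_iff_le.mpr h) h1
  rw [Lcount, hset, ← Finset.coe_Iic, Set.ncard_coe_finset, Nat.card_Iic]

lemma key : ∀ i m, 1 ≤ i → i ≤ modelX (m + 1) - 1 →
    modelF (m + 1) i = modelX (m + 1 + i) := by
  intro i
  induction i with
  | zero => omega
  | succ i ih =>
    intro m _ h2
    rcases Nat.eq_zero_or_pos i with h0 | h1
    · subst h0
      rw [modelX_succ]
    · have hlt := modelX_succ_lt m
      have e12 : modelX (m + 1 + 1) = modelX (m + 2) := by congr 1
      have hx2 : 2 ≤ modelF (m + 1) 1 := (modelF_props (m + 1)).2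
      have hstep : modelF (m + 1) (i + 1) = modelF (m + 2) i := by
        show modelF (m + 1) (i + 1) = modelF (m + 1) (gx (modelF (m + 1) 1) i)
        rw [gx_eq_s6 hx2 h1 (by rw [← modelX_succ]; omega)]
      rw [hstep, ih (m + 1) h1 (by omega)]
      congr 1
      omega

/-- For every `n ≥ 1` and `0 ≤ i ≤ x n - 1`, the number of survivors of the first `n`
stages of the model sieve that are `≤ x (n+i)` equals `1 + i`. -/
theorem model_sieve_count_at_later_primes (n : ℕ) (hn : 1 ≤ n) (i : ℕ)
    (hi : i ≤ modelX n - 1) :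
    Lcount n (modelX (n + i)) = 1 + i := by
  obtain ⟨m, rfl⟩ : ∃ m, n = m + 1 := ⟨n - 1, by omega⟩
  have hsm := (modelF_props (m + 1)).1
  rcases Nat.eq_zero_or_pos i with h0 | h1
  · subst h0
    have h2 : 2 ≤ modelX (m + 1) := by rw [modelX_succ]; exact (modelF_props m).2
    have hz : modelF (m + 1) 0 = 1 := modelF_zero (m + 1)
    have h1' : modelF (m + 1) 1 = modelX (m + 2) := (modelX_succ (m + 1)).symm
    have := Lcount_eq (n := m + 1) (j := 0) (t := modelX (m + 1))
      (by rw [hz]; omega) (by rw [zero_add, h1']; exact modelX_succ_lt m)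
    simpa using this
  · have hk := key i m h1 hi
    have := Lcount_eq (n := m + 1) (j := i) (t := modelX (m + 1 + i))
      (le_of_eq hk) (by rw [← hk]; exact hsm (by omega))
    rw [show m + 1 + i = m + (1 + i) by omega] at this ⊢
    omega
end

section
/- Mertens' theorem for the model sieve: the stage-n density d n = ∏_{i=1}^{n} (1 − 1/(x i)) satisfies d n · log n → 1 as n → ∞, i.e., d n is asymptotic to 1/log n. -/
set_option maxHeartbeats 1000000

namespace MS


lemma infinite_p (x : ℕ) (hx : 2 ≤ x) : {k : ℕ | k % x ≠ 1}.Infinite := by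
  apply Set.infinite_of_injective_forall_mem (f := fun n : ℕ => x * n)
  case hi => exact fun a b h => Nat.eq_of_mul_eq_mul_left (by omega) h
  case hf =>
    intro n
    simp only [Set.mem_setOf_eq, Nat.mul_mod_right]
    omega

lemma count_p (x : ℕ) (hx : 2 ≤ x) (m : ℕ) :
    Nat.count (fun k => k % x ≠ 1) m = m - (m + x - 2) / x := by
  induction m with
  | zero => simp [Nat.div_eq_of_lt (by omega : x - 2 < x)]
  | succ m ih =>
    rw [Nat.count_succ, ih]
    have hq : m = x * (m / x) + m % x := (Nat.div_add_mod m x).symm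
    set q := m / x with hqdef
    set r := m % x with hrdef
    have hr : r < x := Nat.mod_lt _ (by omega)
    have h1 : (m + x - 2) / x = q + (r + x - 2) / x := by
      have : m + x - 2 = x * q + (r + x - 2) := by omega
      rw [this, Nat.mul_add_div (by omega)]
    have h2 : (m + 1 + x - 2) / x = q + (r + x - 1) / x := by
      have : m + 1 + x - 2 = x * q + (r + x - 1) := by omega
      rw [this, Nat.mul_add_div (by omega)]
    have hA : (r + x - 2) / x = if 2 ≤ r then 1 else 0 := by
      split
      · exact Nat.div_eq_of_lt_le (by omega) (by omega)
      · exact Nat.div_eq_of_lt (by omega)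
    have hB : (r + x - 1) / x = if 1 ≤ r then 1 else 0 := by
      split
      · exact Nat.div_eq_of_lt_le (by omega) (by omega)
      · exact Nat.div_eq_of_lt (by omega)
    have hm2 : 2 * q + r ≤ m := by
      calc 2 * q + r ≤ x * q + r := by
            have := Nat.mul_le_mul_right q hx; omega
        _ = m := by omega
    simp only [h1, h2, hA, hB]
    split_ifs <;> omega



lemma gx_mem (x : ℕ) (hx : 2 ≤ x) (k : ℕ) : gx x k % x ≠ 1 :=
  Nat.nth_mem_of_infinite (infinite_p x hx) k

lemma gx_count (x : ℕ) (hx : 2 ≤ x) (k : ℕ) :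
    gx x k - (gx x k + x - 2) / x = k := by
  have := Nat.count_nth_of_infinite (p := fun k => k % x ≠ 1) (infinite_p x hx) k
  rwa [count_p x hx] at this

lemma gx_zero (x : ℕ) (hx : 2 ≤ x) : gx x 0 = 0 := by
  have h0 : (fun k => k % x ≠ 1) 0 := by simp only [Nat.zero_mod]; omega
  have := Nat.nth_count (p := fun k => k % x ≠ 1) h0
  rwa [Nat.count_zero] at this

lemma gx_one (x : ℕ) (hx : 2 ≤ x) : gx x 1 = 2 := by
  have h2 : (fun k => k % x ≠ 1) 2 := by
    simp only
    rcases Nat.lt_or_ge 2 x with h | h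
    · rw [Nat.mod_eq_of_lt h]; omega
    · have : x = 2 := by omega
      simp [this]
  have := Nat.nth_count (p := fun k => k % x ≠ 1) h2
  have hc : Nat.count (fun k => k % x ≠ 1) 2 = 1 := by
    rw [count_p x hx]
    have : (2 + x - 2) / x = 1 := by
      have : 2 + x - 2 = x := by omega
      rw [this, Nat.div_self (by omega)]
    omega
  rw [hc] at this
  exact this

lemma gx_succ (x k : ℕ) (hx : 2 ≤ x) (hk : 1 ≤ k) (hk2 : k + 2 ≤ x) : gx x k = k + 1 := by
  have hmem : (fun j => j % x ≠ 1) (k + 1) := by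
    simp only
    rw [Nat.mod_eq_of_lt (by omega)]
    omega
  have := Nat.nth_count (p := fun j => j % x ≠ 1) hmem
  have hc : Nat.count (fun j => j % x ≠ 1) (k + 1) = k := by
    rw [count_p x hx]
    have : (k + 1 + x - 2) / x = 1 := Nat.div_eq_of_lt_le (by omega) (by omega)
    omega
  rw [hc] at this
  exact this

lemma gx_bounds (x k : ℕ) (hx : 2 ≤ x) (hk : 1 ≤ k) :
    x * k ≤ (x - 1) * gx x k ∧ (x - 1) * gx x k ≤ x * k + (x - 2) := by
  set G := gx x k with hGdef
  have hmem : G % x ≠ 1 := gx_mem x hx k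
  have hcnt : G - (G + x - 2) / x = k := gx_count x hx k
  have hdm : G = x * (G / x) + G % x := (Nat.div_add_mod G x).symm
  set q := G / x with hq
  set r := G % x with hrd
  have hr : r < x := Nat.mod_lt _ (by omega)
  have hdiv : (G + x - 2) / x = q + (r + x - 2) / x := by
    have h : G + x - 2 = x * q + (r + x - 2) := by omega
    rw [h, Nat.mul_add_div (by omega)]
  have h2q : 2 * q ≤ x * q := Nat.mul_le_mul_right q hx
  have e1 : (x - 1) * G + G = x * G := by
    have hx1 : x - 1 + 1 = x := by omega
    calc (x - 1) * G + G = ((x - 1) + 1) * G := by ring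
      _ = x * G := by rw [hx1]
  have hxs : x - 2 + 2 = x := by omega
  rcases Nat.lt_or_ge r 2 with h2 | h2
  · have hr0 : r = 0 := by omega
    have hA : (r + x - 2) / x = 0 := Nat.div_eq_of_lt (by omega)
    have hk' : k + q = G := by omega
    have hxk : x * k + x * q = x * G := by rw [← hk']; ring
    constructor
    · linarith
    · linarith
  · have hA : (r + x - 2) / x = 1 := Nat.div_eq_of_lt_le (by omega) (by omega)
    have hk' : k + q + 1 = G := by omega
    have hxk : x * k + x * q + x = x * G := by rw [← hk']; ring
    constructor
    · linarith
    · linarith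

lemma gx_pos (x k : ℕ) (hx : 2 ≤ x) (hk : 1 ≤ k) : 1 ≤ gx x k := by
  by_contra h
  have h0 : gx x k = 0 := by omega
  have := (gx_bounds x k hx hk).1
  rw [h0] at this
  simp at this
  omega



lemma base : ∀ n, modelF n 0 = 1 ∧ StrictMono (modelF n) ∧ 2 ≤ modelF n 1 := by
  intro n
  induction n with
  | zero =>
    refine ⟨rfl, fun a b h => by simpa [modelF] using h, le_refl 2⟩
  | succ n ih =>
    obtain ⟨h0, hmono, h1⟩ := ih
    have hg : StrictMono (gx (modelF n 1)) := Nat.nth_strictMono (infinite_p _ h1)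
    have hz : modelF (n+1) 0 = 1 := by
      show modelF n (gx (modelF n 1) 0) = 1
      rw [gx_zero _ h1, h0]
    have hm : StrictMono (modelF (n+1)) := fun a b h => hmono (hg h)
    refine ⟨hz, hm, ?_⟩
    show 2 ≤ modelF n (gx (modelF n 1) 1)
    rw [gx_one _ h1]
    have e1 : modelF n 0 < modelF n 1 := hmono (by norm_num)
    have e2 : modelF n 1 < modelF n 2 := hmono (by norm_num)
    omega

lemma modelF_zero (n : ℕ) : modelF n 0 = 1 := (base n).1
lemma modelF_mono (n : ℕ) : StrictMono (modelF n) := (base n).2.1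
lemma modelF_one (n : ℕ) : 2 ≤ modelF n 1 := (base n).2.2

lemma modelF_succ_one (n : ℕ) : modelF (n+1) 1 = modelF n 2 := by
  show modelF n (gx (modelF n 1) 1) = modelF n 2
  rw [gx_one _ (modelF_one n)]

lemma modelF_one_ge (n : ℕ) : n + 2 ≤ modelF n 1 := by
  induction n with
  | zero => exact le_refl 2
  | succ n ih =>
    rw [modelF_succ_one]
    have : modelF n 1 < modelF n 2 := modelF_mono n (by norm_num)
    omega

lemma modelX_succ (n : ℕ) : modelX (n+1) = modelF n 1 := by simp [modelX]

lemma modelX_two_le (n : ℕ) : 2 ≤ modelX n := by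
  cases n with
  | zero => exact le_refl 2
  | succ n => rw [modelX_succ]; exact modelF_one n

lemma modelX_ge (n : ℕ) (hn : 1 ≤ n) : n + 1 ≤ modelX n := by
  cases n with
  | zero => omega
  | succ n => rw [modelX_succ]; have := modelF_one_ge n; omega

lemma modelX_lt_succ (n : ℕ) (hn : 1 ≤ n) : modelX n < modelX (n+1) := by
  cases n with
  | zero => omega
  | succ m =>
    rw [modelX_succ, modelX_succ, modelF_succ_one]
    exact modelF_mono m (by norm_num)

lemma modelX_mono (i j : ℕ) (hi : 1 ≤ i) (hij : i ≤ j) : modelX i ≤ modelX j := by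
  induction j, hij using Nat.le_induction with
  | base => exact le_refl _
  | succ j hj ih => exact le_trans ih (le_of_lt (modelX_lt_succ j (by omega)))

lemma shift : ∀ t m, (∀ j, m < j → j ≤ m + t → m + t + 3 ≤ modelX j + j) →
    modelF (m + t) 1 = modelF m (t + 1) := by
  intro t
  induction t with
  | zero => intro m _; rfl
  | succ t ih =>
    intro m hcond
    have hidx : m + (t + 1) = (m + 1) + t := by omega
    rw [hidx]
    have h2 : modelF ((m + 1) + t) 1 = modelF (m+1) (t+1) := by
      apply ih (m+1)
      intro j hj1 hj2
      have := hcond j (by omega) (by omega)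
      omega
    rw [h2]
    have hx1 : 2 ≤ modelF m 1 := modelF_one m
    have hxbig : (t + 1) + 2 ≤ modelF m 1 := by
      have := hcond (m+1) (by omega) (by omega)
      rw [modelX_succ] at this
      omega
    show modelF m (gx (modelF m 1) (t+1)) = modelF m (t+2)
    rw [gx_succ _ _ hx1 (by omega) hxbig]



noncomputable def U (n : ℕ) : ℝ := ∏ i ∈ Finset.Icc 1 n, ((modelX i : ℝ) / ((modelX i : ℝ) - 1))

lemma X_cast_ge (i : ℕ) : (2:ℝ) ≤ (modelX i : ℝ) := by
  exact_mod_cast modelX_two_le i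

lemma factor_ge_one (i : ℕ) : 1 ≤ (modelX i : ℝ) / ((modelX i : ℝ) - 1) := by
  have h := X_cast_ge i
  rw [le_div_iff₀ (by linarith)]
  linarith

lemma U_one_le (n : ℕ) : 1 ≤ U n := by
  unfold U
  calc (1:ℝ) = ∏ _i ∈ Finset.Icc 1 n, (1:ℝ) := by simp
    _ ≤ ∏ i ∈ Finset.Icc 1 n, ((modelX i : ℝ) / ((modelX i : ℝ) - 1)) :=
      Finset.prod_le_prod (fun i _ => by norm_num) (fun i _ => factor_ge_one i)

lemma U_pos (n : ℕ) : 0 < U n := lt_of_lt_of_le one_pos (U_one_le n)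

lemma U_succ (n : ℕ) :
    U (n+1) = U n * ((modelX (n+1) : ℝ) / ((modelX (n+1) : ℝ) - 1)) := by
  unfold U
  rw [Finset.prod_Icc_succ_top (by omega : 1 ≤ n + 1)]

lemma U_mono : Monotone U := by
  apply monotone_nat_of_le_succ
  intro n
  rw [U_succ]
  nlinarith [U_pos n, factor_ge_one (n+1)]

lemma f_lb : ∀ n (k : ℕ), 1 ≤ k → (k:ℝ) * U n - U n + 2 ≤ (modelF n k : ℝ) := by
  intro n
  induction n with
  | zero =>
    intro k hk
    have : modelF 0 k = k + 1 := rfl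
    rw [this]
    unfold U
    simp only [Finset.Icc_self, Finset.Icc_eq_empty_of_lt (by omega : (1:ℕ) > 0)]
    push_cast
    simp only [Finset.prod_empty]
    linarith
  | succ n ih =>
    intro k hk
    set X := modelF n 1 with hXdef
    have hX2 : 2 ≤ X := modelF_one n
    have hXeq : modelX (n+1) = X := modelX_succ n
    set G := gx X k with hGdef
    have hG1 : 1 ≤ G := gx_pos X k hX2 hk
    have hfe : modelF (n+1) k = modelF n G := rfl
    have hIH := ih G hG1
    have hb := (gx_bounds X k hX2 hk).1
    have hcast : ((X:ℝ) - 1) * G = ((X - 1) * G : ℕ) := by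
      push_cast [Nat.cast_sub (by omega : 1 ≤ X)]
      ring
    have h1 : (X:ℝ) * k ≤ ((X:ℝ) - 1) * G := by
      rw [hcast]
      exact_mod_cast hb
    have hX1 : (0:ℝ) < (X:ℝ) - 1 := by
      have : (2:ℝ) ≤ (X:ℝ) := by exact_mod_cast hX2
      linarith
    have key : (k:ℝ) * U (n+1) ≤ (G:ℝ) * U n := by
      rw [U_succ n, hXeq]
      rw [show (k:ℝ) * (U n * ((X:ℝ) / ((X:ℝ) - 1))) = ((X:ℝ) * k * U n) / ((X:ℝ)-1) by ring]
      rw [div_le_iff₀ hX1]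
      nlinarith [U_pos n]
    have hUm : U n ≤ U (n+1) := U_mono (by omega)
    rw [hfe]
    calc (k:ℝ) * U (n+1) - U (n+1) + 2 ≤ (G:ℝ) * U n - U n + 2 := by linarith
      _ ≤ (modelF n G : ℝ) := hIH

lemma f_ub : ∀ n (k : ℕ), 1 ≤ k → (modelF n k : ℝ) ≤ 1 + ((k:ℝ) + n) * U n := by
  intro n
  induction n with
  | zero =>
    intro k hk
    have : modelF 0 k = k + 1 := rfl
    rw [this]
    unfold U
    simp only [Finset.Icc_eq_empty_of_lt (by omega : (1:ℕ) > 0), Finset.prod_empty]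
    push_cast
    linarith
  | succ n ih =>
    intro k hk
    set X := modelF n 1 with hXdef
    have hX2 : 2 ≤ X := modelF_one n
    have hXeq : modelX (n+1) = X := modelX_succ n
    set G := gx X k with hGdef
    have hG1 : 1 ≤ G := gx_pos X k hX2 hk
    have hfe : modelF (n+1) k = modelF n G := rfl
    have hIH := ih G hG1
    have hb := (gx_bounds X k hX2 hk).2
    have hX1 : (0:ℝ) < (X:ℝ) - 1 := by
      have : (2:ℝ) ≤ (X:ℝ) := by exact_mod_cast hX2
      linarith
    have h1 : ((X:ℝ) - 1) * G ≤ (X:ℝ) * k + ((X:ℝ) - 2) := by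
      have hc1 : (((X - 1) * G : ℕ) : ℝ) = ((X:ℝ) - 1) * G := by
        push_cast [Nat.cast_sub (by omega : 1 ≤ X)]
        ring
      have hc2 : ((X * k + (X - 2) : ℕ) : ℝ) = (X:ℝ) * k + ((X:ℝ) - 2) := by
        push_cast [Nat.cast_sub (by omega : 2 ≤ X)]
        ring
      rw [← hc1, ← hc2]
      exact_mod_cast hb
    have key : (G:ℝ) * U n ≤ (k:ℝ) * U (n+1) + U n := by
      rw [U_succ n, hXeq]
      rw [show (k:ℝ) * (U n * ((X:ℝ) / ((X:ℝ) - 1))) + U n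
          = ((X:ℝ) * k * U n + ((X:ℝ)-1) * U n) / ((X:ℝ)-1) by field_simp]
      rw [le_div_iff₀ hX1]
      nlinarith [U_pos n]
    have hUm : U n ≤ U (n+1) := U_mono (by omega)
    rw [hfe]
    calc (modelF n G : ℝ) ≤ 1 + ((G:ℝ) + n) * U n := hIH
      _ = 1 + (G:ℝ) * U n + n * U n := by ring
      _ ≤ 1 + ((k:ℝ) * U (n+1) + U n) + n * U n := by linarith
      _ ≤ 1 + ((k:ℝ) + ((n:ℝ)+1)) * U (n+1) := by nlinarith [U_one_le (n+1)]
      _ = 1 + ((k:ℝ) + ((n+1:ℕ):ℝ)) * U (n+1) := by push_cast; ring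

lemma d_eq (n : ℕ) : (∏ i ∈ Finset.Icc 1 n, (1 - 1 / (modelX i : ℝ))) = (U n)⁻¹ := by
  unfold U
  rw [← Finset.prod_inv_distrib]
  apply Finset.prod_congr rfl
  intro i _
  have h := X_cast_ge i
  rw [inv_div]
  field_simp



lemma U_zero : U 0 = 1 := by unfold U; simp

lemma inv_le_log_sub (n : ℕ) (hn : 2 ≤ n) :
    1 / (n:ℝ) ≤ Real.log n - Real.log ((n:ℝ) - 1) := by
  have hn1 : (0:ℝ) < (n:ℝ) - 1 := by
    have : (2:ℝ) ≤ (n:ℝ) := by exact_mod_cast hn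
    linarith
  have hn0 : (0:ℝ) < (n:ℝ) := by linarith
  have h := Real.log_le_sub_one_of_pos (show (0:ℝ) < ((n:ℝ)-1)/n by positivity)
  rw [Real.log_div (by linarith) (by linarith)] at h
  have : ((n:ℝ)-1)/n - 1 = -(1/n) := by field_simp; ring
  linarith [h.trans_eq this]

lemma U_ge_log (n : ℕ) : Real.log ((n:ℝ)+1) ≤ U n := by
  induction n with
  | zero => simp [U_zero]
  | succ n ih =>
    set X := modelX (n+1) with hXd
    have hX2 : (2:ℝ) ≤ (X:ℝ) := by exact_mod_cast modelX_two_le (n+1)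
    have hX1 : (0:ℝ) < (X:ℝ) - 1 := by linarith
    have hXub : (X:ℝ) ≤ 1 + (1 + (n:ℝ)) * U n := by
      have := f_ub n 1 (le_refl 1)
      rw [← modelX_succ n] at this
      simpa using this
    have hstep : U n + 1/((n:ℝ)+1) ≤ U (n+1) := by
      rw [U_succ n, ← hXd]
      have he : U n * ((X:ℝ)/((X:ℝ)-1)) = U n + U n / ((X:ℝ)-1) := by
        field_simp
        ring
      rw [he]
      have h2 : 1/((n:ℝ)+1) ≤ U n / ((X:ℝ)-1) := by
        rw [div_le_div_iff₀ (by positivity) hX1]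
        nlinarith [U_pos n, U_one_le n]
      linarith
    have hlog : Real.log ((n:ℝ)+2) ≤ Real.log ((n:ℝ)+1) + 1/((n:ℝ)+1) := by
      have h := Real.log_le_sub_one_of_pos (show (0:ℝ) < ((n:ℝ)+2)/((n:ℝ)+1) by positivity)
      rw [Real.log_div (by positivity) (by positivity)] at h
      have : ((n:ℝ)+2)/((n:ℝ)+1) - 1 = 1/((n:ℝ)+1) := by field_simp; ring
      linarith [h.trans_eq this]
    push_cast
    calc Real.log ((n:ℝ)+1+1) = Real.log ((n:ℝ)+2) := by ring_nf
      _ ≤ Real.log ((n:ℝ)+1) + 1/((n:ℝ)+1) := hlog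
      _ ≤ U n + 1/((n:ℝ)+1) := by linarith [ih]
      _ ≤ U (n+1) := hstep

lemma harmonic_shift (m : ℕ) (hm : 2 ≤ m) :
    ∀ n, m ≤ n → ∑ j ∈ Finset.Icc (m+1) n, (1:ℝ)/((j:ℝ)-1)
      ≤ Real.log ((n:ℝ)-1) - Real.log ((m:ℝ)-1) := by
  intro n hn
  induction n, hn using Nat.le_induction with
  | base => simp [Finset.Icc_eq_empty_of_lt (by omega : m + 1 > m)]
  | succ n hn ih =>
    rw [Finset.sum_Icc_succ_top (by omega : m + 1 ≤ n + 1)]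
    have key : 1/((n:ℝ)+1-1) ≤ Real.log ((n:ℝ)+1-1) - Real.log ((n:ℝ)-1) := by
      have := inv_le_log_sub n (by omega)
      simpa using this
    have hcast : ((n+1:ℕ):ℝ) = (n:ℝ)+1 := by push_cast; ring
    rw [hcast]
    linarith [ih]

lemma harmonic_ub (N : ℕ) (hN : 2 ≤ N) :
    ∀ n, N ≤ n → ∑ j ∈ Finset.Ico N n, (1:ℝ)/(j:ℝ)
      ≤ Real.log ((n:ℝ)-1) - Real.log ((N:ℝ)-1) := by
  intro n hn
  induction n, hn using Nat.le_induction with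
  | base => simp
  | succ n hn ih =>
    rw [Finset.sum_Ico_succ_top (by omega : N ≤ n)]
    have key : 1/(n:ℝ) ≤ Real.log ((n:ℝ)+1-1) - Real.log ((n:ℝ)-1) := by
      have := inv_le_log_sub n (by omega)
      simpa using this
    have hcast : ((n+1:ℕ):ℝ) = (n:ℝ)+1 := by push_cast; ring
    rw [hcast]
    linarith [ih]

lemma X_big (n : ℕ) (hn : 4 ≤ n) :
    (n:ℝ)/8 * Real.log n ≤ (modelX (n+1) : ℝ) - 1 := by
  set m := (n+2)/2 with hmd
  have hmn : m ≤ n := by omega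
  have hcond : ∀ j, m < j → j ≤ m + (n - m) → m + (n - m) + 3 ≤ modelX j + j := by
    intro j hj1 hj2
    have hj' : 2 * j ≥ n + 2 := by omega
    have := modelX_ge j (by omega)
    omega
  have hsh : modelF n 1 = modelF m (n - m + 1) := by
    have := shift (n - m) m hcond
    rw [show m + (n - m) = n by omega] at this
    exact this
  have hXeq : (modelX (n+1) : ℕ) = modelF m (n - m + 1) := by
    rw [modelX_succ n, hsh]
  have hlb := f_lb m (n - m + 1) (by omega)
  have hUm := U_ge_log m
  -- X - 1 ≥ (n-m) * U m
  have h1 : ((n - m : ℕ):ℝ) * U m + 1 ≤ (modelX (n+1) : ℝ) - 1 + 1 := by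
    rw [hXeq]
    have hc : ((n - m + 1 : ℕ):ℝ) = ((n-m:ℕ):ℝ) + 1 := by push_cast; ring
    rw [hc] at hlb
    nlinarith [hlb, U_one_le m]
  have hcnm : ((n - m : ℕ):ℝ) = (n:ℝ) - (m:ℝ) := by
    push_cast [Nat.cast_sub hmn]
    ring
  have h2 : ((n:ℝ) - 2)/2 ≤ ((n - m : ℕ):ℝ) := by
    have hℕ : n - 2 ≤ 2 * (n - m) := by omega
    have hcast := (Nat.cast_le (α := ℝ)).2 hℕ
    push_cast [Nat.cast_sub hmn, Nat.cast_sub (show 2 ≤ n by omega)] at hcast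
    rw [hcnm]
    linarith
  have hm1 : (n:ℝ)/2 ≤ (m:ℝ)+1 := by
    have hℕ : n ≤ 2 * (m + 1) := by omega
    have hcast := (Nat.cast_le (α := ℝ)).2 hℕ
    push_cast at hcast
    linarith
  have hn4 : (4:ℝ) ≤ (n:ℝ) := by exact_mod_cast hn
  have hlogm : Real.log ((n:ℝ)/2) ≤ Real.log ((m:ℝ)+1) :=
    Real.log_le_log (by positivity) hm1
  have hlog2 : Real.log (n:ℝ) / 2 ≤ Real.log ((n:ℝ)/2) := by
    rw [Real.log_div (by positivity) (by norm_num)]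
    have h4 : Real.log 4 ≤ Real.log (n:ℝ) := Real.log_le_log (by norm_num) hn4
    have h42 : Real.log 4 = 2 * Real.log 2 := by
      rw [show (4:ℝ) = 2^2 by norm_num, Real.log_pow]
      push_cast
      ring
    linarith
  have hlogpos : 0 ≤ Real.log (n:ℝ) := Real.log_nonneg (by linarith)
  have hUm2 : Real.log (n:ℝ) / 2 ≤ U m := by linarith
  have hXlb : ((n - m : ℕ):ℝ) * U m ≤ (modelX (n+1) : ℝ) - 1 := by linarith
  calc (n:ℝ)/8 * Real.log n ≤ ((n:ℝ) - 2)/2 * (Real.log n / 2) := by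
        nlinarith [mul_nonneg (show (0:ℝ) ≤ (n:ℝ) - 4 by linarith) hlogpos]
    _ ≤ ((n - m : ℕ):ℝ) * U m :=
        mul_le_mul h2 hUm2 (by linarith) (by positivity)
    _ ≤ (modelX (n+1) : ℝ) - 1 := hXlb



lemma term_nonneg (j : ℕ) : (0:ℝ) ≤ 1/((modelX j:ℝ)-1) := by
  have : (2:ℝ) ≤ (modelX j:ℝ) := by exact_mod_cast modelX_two_le j
  have : (0:ℝ) < (modelX j:ℝ) - 1 := by linarith
  positivity

lemma U_ratio (m : ℕ) : ∀ n, m ≤ n →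
    (∑ j ∈ Finset.Icc (m+1) n, 1/((modelX j:ℝ)-1)) ≤ 1/2 →
    U n ≤ U m * (1 + 2 * ∑ j ∈ Finset.Icc (m+1) n, 1/((modelX j:ℝ)-1)) := by
  intro n hn
  induction n, hn using Nat.le_induction with
  | base =>
    intro _
    simp [Finset.Icc_eq_empty_of_lt (by omega : m + 1 > m)]
  | succ n hn ih =>
    intro hS'
    have hsplit : ∑ j ∈ Finset.Icc (m+1) (n+1), 1/((modelX j:ℝ)-1)
        = (∑ j ∈ Finset.Icc (m+1) n, 1/((modelX j:ℝ)-1)) + 1/((modelX (n+1):ℝ)-1) :=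
      Finset.sum_Icc_succ_top (by omega : m + 1 ≤ n + 1) _
    set S := ∑ j ∈ Finset.Icc (m+1) n, 1/((modelX j:ℝ)-1) with hSd
    set a := 1/((modelX (n+1):ℝ)-1) with had
    have ha : 0 ≤ a := term_nonneg (n+1)
    have hSnn : 0 ≤ S := Finset.sum_nonneg (fun j _ => term_nonneg j)
    rw [hsplit] at hS' ⊢
    have hS : S ≤ 1/2 := by linarith
    have hU := ih hS
    have hX2 : (2:ℝ) ≤ (modelX (n+1):ℝ) := by exact_mod_cast modelX_two_le (n+1)
    have hX1 : (0:ℝ) < (modelX (n+1):ℝ) - 1 := by linarith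
    have he : U (n+1) = U n * (1 + a) := by
      rw [U_succ n, had]
      congr 1
      field_simp
      ring
    rw [he]
    have h1 : U n * (1 + a) ≤ U m * (1 + 2*S) * (1 + a) := by
      apply mul_le_mul_of_nonneg_right hU (by linarith)
    calc U n * (1 + a) ≤ U m * (1 + 2*S) * (1+a) := h1
      _ ≤ U m * (1 + 2 * (S + a)) := by
          nlinarith [mul_nonneg (mul_nonneg (le_of_lt (U_pos m)) ha)
            (show (0:ℝ) ≤ 1 - 2*S by linarith)]

lemma step_bound (ε : ℝ) (hε : 0 < ε) (hε1 : ε ≤ 1) :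
    ∀ᶠ n in Filter.atTop, U (n+1) - U n ≤ (1+ε)/n := by
  obtain ⟨K, hKge⟩ := exists_nat_ge ((2:ℝ) + 4/ε)
  have hKR : (2:ℝ) ≤ (K:ℝ) := le_trans (le_add_of_nonneg_right (by positivity)) hKge
  have hK2 : 2 ≤ K := by exact_mod_cast hKR
  have hlogtend : Filter.Tendsto (fun n : ℕ => Real.log n) Filter.atTop Filter.atTop :=
    Real.tendsto_log_atTop.comp tendsto_natCast_atTop_atTop
  have hC1 : ∀ᶠ n : ℕ in Filter.atTop, 2 * Real.log (2*(K:ℝ)) ≤ Real.log n :=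
    hlogtend.eventually_ge_atTop _
  have hC2 : ∀ᶠ n : ℕ in Filter.atTop, 64*(K:ℝ) ≤ Real.log n :=
    hlogtend.eventually_ge_atTop _
  have hC3 : ∀ᶠ n : ℕ in Filter.atTop, 64 * Real.log (4*(K:ℝ)) / ε ≤ Real.log n :=
    hlogtend.eventually_ge_atTop _
  have hN : ∀ᶠ n : ℕ in Filter.atTop, 8*K*K + 16*K + 100 ≤ n :=
    Filter.eventually_ge_atTop _
  filter_upwards [hC1, hC2, hC3, hN] with n hlog1 hlog2 hlog3 hn
  -- basic setup
  set m := n / K with hmd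
  have hKpos : 0 < K := by omega
  have hdm : n = K * m + n % K := (Nat.div_add_mod n K).symm
  have hmod : n % K < K := Nat.mod_lt _ hKpos
  have h4K : 4 * K ≤ n := by nlinarith
  have hm4 : 4 ≤ m := (Nat.le_div_iff_mul_le hKpos).2 h4K
  have hmn : m ≤ n := Nat.div_le_self n K
  have hmltn : m < n := by
    have : K * m ≤ n := by omega
    nlinarith
  -- real versions
  have hdmR : (n:ℝ) = (K:ℝ) * (m:ℝ) + ((n % K : ℕ):ℝ) := by exact_mod_cast hdm
  have hmodR : ((n % K : ℕ):ℝ) < (K:ℝ) := by exact_mod_cast hmod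
  have hmodR0 : (0:ℝ) ≤ ((n % K : ℕ):ℝ) := Nat.cast_nonneg _
  have hm4R : (4:ℝ) ≤ (m:ℝ) := by exact_mod_cast hm4
  have hnR : (100:ℝ) ≤ (n:ℝ) := by
    have : 100 ≤ n := by omega
    exact_mod_cast this
  have hKmle : (K:ℝ) * m ≤ (n:ℝ) := by linarith
  have hn2Km : (n:ℝ) ≤ 2 * (K:ℝ) * m := by nlinarith
  have hlognpos : (0:ℝ) < Real.log n := by
    have : Real.log 1 < Real.log (n:ℝ) := by
      apply Real.log_lt_log (by norm_num) (by linarith)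
    simpa using this
  -- log m ≥ log n / 2
  have hlogm_half : Real.log (n:ℝ) / 2 ≤ Real.log (m:ℝ) := by
    have h1 : (n:ℝ)/(2*K) ≤ (m:ℝ) := by
      rw [div_le_iff₀ (by positivity)]
      nlinarith
    have h2 : Real.log ((n:ℝ)/(2*K)) ≤ Real.log (m:ℝ) :=
      Real.log_le_log (by positivity) h1
    rw [Real.log_div (by linarith) (by positivity)] at h2
    linarith
  have hlogmpos : (0:ℝ) < Real.log m := by linarith
  -- shift condition
  have hlogm32 : 32*(K:ℝ) ≤ Real.log m := by linarith
  have hXm1R : ((n:ℝ) + 3) ≤ (modelX (m+1) : ℝ) := by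
    have hxb := X_big m hm4
    have hprod : (m:ℝ) * (32*(K:ℝ)) ≤ (m:ℝ) * Real.log m :=
      mul_le_mul_of_nonneg_left hlogm32 (by linarith)
    nlinarith
  have hXm1 : n + 3 ≤ modelX (m+1) := by exact_mod_cast hXm1R
  have hcond : ∀ j, m < j → j ≤ m + (n - m) → m + (n - m) + 3 ≤ modelX j + j := by
    intro j hj1 hj2
    have hmono := modelX_mono (m+1) j (by omega) (by omega)
    omega
  have hsh : modelF n 1 = modelF m (n - m + 1) := by
    have := shift (n - m) m hcond
    rwa [show m + (n - m) = n by omega] at this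
  -- X lower bound
  set X := modelX (n+1) with hXd
  have hXeq : X = modelF m (n - m + 1) := by rw [hXd, modelX_succ n, hsh]
  have hlb := f_lb m (n - m + 1) (by omega)
  have hcnm : ((n - m + 1 : ℕ):ℝ) = (n:ℝ) - m + 1 := by
    push_cast [Nat.cast_sub hmn]
    ring
  rw [hcnm] at hlb
  have hexp : ((n:ℝ) - m + 1)*U m = ((n:ℝ)-m)*U m + U m := by ring
  have hXlb : ((n:ℝ) - m) * U m ≤ (X:ℝ) - 1 := by
    rw [hXeq]
    linarith [hlb, hexp, U_one_le m]
  -- T bound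
  set T := ∑ j ∈ Finset.Icc (m+1) n, 1/((modelX j:ℝ)-1) with hTd
  have hterm : ∀ j ∈ Finset.Icc (m+1) n,
      1/((modelX j:ℝ)-1) ≤ 8/Real.log m * (1/((j:ℝ)-1)) := by
    intro j hj
    rw [Finset.mem_Icc] at hj
    have hj1 : 4 ≤ j - 1 := by omega
    have hxbj := X_big (j-1) hj1
    rw [show j - 1 + 1 = j by omega] at hxbj
    have hjR : ((j-1:ℕ):ℝ) = (j:ℝ) - 1 := by
      push_cast [Nat.cast_sub (by omega : 1 ≤ j)]
      ring
    rw [hjR] at hxbj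
    have hjm : (m:ℝ) ≤ (j:ℝ) - 1 := by
      have h' : m ≤ j - 1 := by omega
      have := (Nat.cast_le (α := ℝ)).2 h'
      rwa [hjR] at this
    have hlogj : Real.log (m:ℝ) ≤ Real.log ((j:ℝ)-1) :=
      Real.log_le_log (by linarith) hjm
    have hden : (0:ℝ) < ((j:ℝ)-1)/8 * Real.log m := by
      apply mul_pos _ hlogmpos
      have : (4:ℝ) ≤ (m:ℝ) := hm4R
      linarith
    have hden2 : ((j:ℝ)-1)/8 * Real.log m ≤ (modelX j:ℝ) - 1 := by
      calc ((j:ℝ)-1)/8 * Real.log m ≤ ((j:ℝ)-1)/8 * Real.log ((j:ℝ)-1) := by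
            apply mul_le_mul_of_nonneg_left hlogj
            linarith
        _ ≤ (modelX j:ℝ) - 1 := hxbj
    have hmain := one_div_le_one_div_of_le hden hden2
    calc 1/((modelX j:ℝ)-1) ≤ 1/(((j:ℝ)-1)/8 * Real.log m) := hmain
      _ = 8/Real.log m * (1/((j:ℝ)-1)) := by
          have ha : ((j:ℝ)-1) ≠ 0 := by linarith
          have hL : Real.log (m:ℝ) ≠ 0 := ne_of_gt hlogmpos
          field_simp
  have hTsum : T ≤ 8/Real.log m * (Real.log ((n:ℝ)-1) - Real.log ((m:ℝ)-1)) := by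
    calc T ≤ ∑ j ∈ Finset.Icc (m+1) n, 8/Real.log m * (1/((j:ℝ)-1)) :=
          Finset.sum_le_sum hterm
      _ = 8/Real.log m * ∑ j ∈ Finset.Icc (m+1) n, (1:ℝ)/((j:ℝ)-1) := by
          rw [Finset.mul_sum]
      _ ≤ 8/Real.log m * (Real.log ((n:ℝ)-1) - Real.log ((m:ℝ)-1)) := by
          apply mul_le_mul_of_nonneg_left (harmonic_shift m (by omega) n hmn)
          positivity
  have h4KR : (4:ℝ)*(K:ℝ) ≤ (n:ℝ) := by exact_mod_cast h4K
  have hratio : Real.log ((n:ℝ)-1) - Real.log ((m:ℝ)-1) ≤ Real.log (4*(K:ℝ)) := by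
    have h1 : (n:ℝ)-1 ≤ 4*(K:ℝ)*((m:ℝ)-1) := by nlinarith
    have h2 : Real.log ((n:ℝ)-1) ≤ Real.log (4*(K:ℝ)*((m:ℝ)-1)) :=
      Real.log_le_log (by linarith) h1
    rw [Real.log_mul (by positivity) (by linarith : ((m:ℝ)-1) ≠ 0)] at h2
    linarith
  have hlog4K : (0:ℝ) < Real.log (4*(K:ℝ)) := Real.log_pos (by linarith)
  have hT4 : T ≤ ε/4 := by
    have hstep : T ≤ 8/Real.log m * Real.log (4*(K:ℝ)) := by
      calc T ≤ 8/Real.log m * (Real.log ((n:ℝ)-1) - Real.log ((m:ℝ)-1)) := hTsum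
        _ ≤ 8/Real.log m * Real.log (4*(K:ℝ)) := by
            apply mul_le_mul_of_nonneg_left hratio
            positivity
    have h64 : 64 * Real.log (4*(K:ℝ)) ≤ Real.log (n:ℝ) * ε := by
      have := hlog3
      rw [div_le_iff₀ hε] at this
      exact this
    have : 8/Real.log m * Real.log (4*(K:ℝ)) ≤ ε/4 := by
      rw [div_mul_eq_mul_div, div_le_div_iff₀ hlogmpos (by norm_num)]
      nlinarith
    linarith
  have hT12 : T ≤ 1/2 := by linarith
  have hTnn : 0 ≤ T := Finset.sum_nonneg (fun j _ => term_nonneg j)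
  have hUn' := U_ratio m n hmn hT12
  have hUn : U n ≤ U m * (1 + 2*T) := by rw [hTd]; exact hUn'
  clear hUn'
  -- final computation
  have hXR2 : (2:ℝ) ≤ (X:ℝ) := by exact_mod_cast modelX_two_le (n+1)
  have hX1 : (0:ℝ) < (X:ℝ) - 1 := by linarith
  have hdiff : U (n+1) - U n = U n / ((X:ℝ)-1) := by
    rw [U_succ n, ← hXd]
    field_simp
    ring
  rw [hdiff]
  have hmR : (m:ℝ) < (n:ℝ) := by exact_mod_cast hmltn
  have hnm1 : (0:ℝ) < (n:ℝ) - m := by linarith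
  have hXlbpos : (0:ℝ) < ((n:ℝ)-m) * U m := mul_pos hnm1 (U_pos m)
  have hstep1 : U n / ((X:ℝ)-1) ≤ (U m * (1+2*T)) / (((n:ℝ)-m) * U m) := by
    apply div_le_div₀ _ hUn hXlbpos hXlb
    have := U_pos m
    nlinarith
  have hsimp : (U m * (1+2*T)) / (((n:ℝ)-m) * U m) = (1+2*T)/((n:ℝ)-m) := by
    rw [mul_comm (U m) _]
    rw [mul_div_mul_right _ _ (ne_of_gt (U_pos m))]
  have h5 : (1+ε) ≤ ε/2 * K := by
    have hid : (ε/2)*(2+4/ε) = ε + 2 := by field_simp; ring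
    nlinarith [mul_le_mul_of_nonneg_left hKge (le_of_lt (half_pos hε))]
  have h6 : (1+ε)*(m:ℝ) ≤ (ε/2)*(n:ℝ) := by
    have h7 : (1+ε)*(m:ℝ) ≤ (ε/2*K)*(m:ℝ) :=
      mul_le_mul_of_nonneg_right h5 (by positivity)
    calc (1+ε)*(m:ℝ) ≤ (ε/2*K)*(m:ℝ) := h7
      _ = (ε/2)*((K:ℝ)*m) := by ring
      _ ≤ (ε/2)*(n:ℝ) := by
          apply mul_le_mul_of_nonneg_left hKmle
          positivity
  clear_value T X
  have hfin : (1+2*T)/((n:ℝ)-m) ≤ (1+ε)/n := by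
    rw [div_le_div_iff₀ hnm1 (by linarith : (0:ℝ) < (n:ℝ))]
    have h8 : T*(n:ℝ) ≤ (ε/4)*(n:ℝ) :=
      mul_le_mul_of_nonneg_right hT4 (by positivity)
    linarith [h6, h8]
  calc U n / ((X:ℝ)-1) ≤ (U m * (1+2*T)) / (((n:ℝ)-m) * U m) := hstep1
    _ = (1+2*T)/((n:ℝ)-m) := hsimp
    _ ≤ (1+ε)/n := hfin



lemma U_sum_from (N : ℕ) (ε : ℝ) (h : ∀ j, N ≤ j → U (j+1) - U j ≤ (1+ε)/j) :
    ∀ n, N ≤ n → U n ≤ U N + (1+ε) * ∑ j ∈ Finset.Ico N n, (1:ℝ)/j := by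
  intro n hn
  induction n, hn using Nat.le_induction with
  | base => simp
  | succ n hn ih =>
    rw [Finset.sum_Ico_succ_top hn]
    have h1 := h n hn
    have hexp : (1+ε) * ((∑ j ∈ Finset.Ico N n, (1:ℝ)/j) + 1/(n:ℝ))
        = (1+ε) * (∑ j ∈ Finset.Ico N n, (1:ℝ)/j) + (1+ε) * (1/(n:ℝ)) := by ring
    have h2 : (1+ε)/(n:ℝ) = (1+ε)*(1/(n:ℝ)) := by ring
    rw [hexp]
    rw [h2] at h1
    linarith [ih]


end MS

open MS in
/-- Mertens' theorem for the model sieve: the stage-`n` density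
`d n = ∏_{i=1}^{n} (1 - 1/(x i))` is asymptotic to `1 / log n`. -/
theorem model_sieve_mertens :
    Filter.Tendsto
      (fun n : ℕ => (∏ i ∈ Finset.Icc 1 n, (1 - 1 / (modelX i : ℝ))) * Real.log n)
      Filter.atTop (nhds 1) := by

  have hfun : ∀ n : ℕ, (∏ i ∈ Finset.Icc 1 n, (1 - 1 / (modelX i : ℝ))) * Real.log n
      = Real.log n / U n := by
    intro n
    rw [d_eq n, inv_mul_eq_div]
  simp only [hfun]
  rw [Metric.tendsto_atTop]
  intro δ hδ
  set γ := min (δ/2) (1/2) with hγd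
  have hγ0 : 0 < γ := lt_min (by linarith) (by norm_num)
  have hγ1 : γ ≤ 1/2 := min_le_right _ _
  have hγδ : γ ≤ δ/2 := min_le_left _ _
  obtain ⟨N₀, hN₀⟩ := Filter.eventually_atTop.1 (step_bound γ hγ0 (by linarith))
  set N := max N₀ 2 with hNd
  have hN2 : 2 ≤ N := le_max_right _ _
  have hstep : ∀ j, N ≤ j → U (j+1) - U j ≤ (1+γ)/j :=
    fun j hj => hN₀ j (le_trans (le_max_left _ _) hj)
  set C := U N with hCd
  have hC1 : 1 ≤ C := U_one_le N
  have hub : ∀ n, N ≤ n → U n ≤ C + (1+γ) * Real.log n := by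
    intro n hn
    have h1 := U_sum_from N γ hstep n hn
    have h2 := harmonic_ub N hN2 n hn
    have hNR : (2:ℝ) ≤ (N:ℝ) := by exact_mod_cast hN2
    have hnN : (N:ℝ) ≤ (n:ℝ) := by exact_mod_cast hn
    have hlogN1 : 0 ≤ Real.log ((N:ℝ)-1) := Real.log_nonneg (by linarith)
    have hlogn : Real.log ((n:ℝ)-1) ≤ Real.log (n:ℝ) :=
      Real.log_le_log (by linarith) (by linarith)
    have hγ0' : (0:ℝ) ≤ 1+γ := by linarith
    have h3 := mul_le_mul_of_nonneg_left h2 hγ0'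
    have h4 : (1+γ) * (Real.log ((n:ℝ)-1) - Real.log ((N:ℝ)-1)) ≤ (1+γ) * Real.log (n:ℝ) := by
      apply mul_le_mul_of_nonneg_left _ hγ0'
      linarith
    linarith
  have hlogtend : Filter.Tendsto (fun n : ℕ => Real.log n) Filter.atTop Filter.atTop :=
    Real.tendsto_log_atTop.comp tendsto_natCast_atTop_atTop
  obtain ⟨N₁, hN₁⟩ := Filter.eventually_atTop.1 (hlogtend.eventually_ge_atTop (C/(γ*γ)))
  refine ⟨max (max N N₁) 2, fun n hn => ?_⟩
  have hnN : N ≤ n := le_trans (le_trans (le_max_left _ _) (le_max_left _ _)) hn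
  have hnN₁ : N₁ ≤ n := le_trans (le_trans (le_max_right _ _) (le_max_left _ _)) hn
  have hn2 : 2 ≤ n := le_trans (le_max_right _ _) hn
  have hn1R : (1:ℝ) < (n:ℝ) := by
    have : (2:ℝ) ≤ (n:ℝ) := by exact_mod_cast hn2
    linarith
  have hlogn_pos : 0 < Real.log (n:ℝ) := Real.log_pos hn1R
  have hUn_pos := U_pos n
  have hfn_le : Real.log (n:ℝ) / U n ≤ 1 := by
    rw [div_le_one hUn_pos]
    have h1 := U_ge_log n
    have h2 : Real.log (n:ℝ) ≤ Real.log ((n:ℝ)+1) :=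
      Real.log_le_log (by linarith) (by linarith)
    linarith
  have hfn_ge : 1 - γ ≤ Real.log (n:ℝ) / U n := by
    rw [le_div_iff₀ hUn_pos]
    have hu := hub n hnN
    have hl := hN₁ n hnN₁
    have hl2 : C ≤ γ*γ*Real.log (n:ℝ) := by
      rw [div_le_iff₀ (by positivity : (0:ℝ) < γ*γ)] at hl
      linarith [hl]
    nlinarith [hu, hl2, hlogn_pos, hγ0, hγ1, hC1, hUn_pos]
  have habs : |Real.log (n:ℝ) / U n - 1| ≤ γ := abs_le.2 ⟨by linarith, by linarith⟩
  calc dist (Real.log (n:ℝ)/U n) 1 = |Real.log (n:ℝ)/U n - 1| := Real.dist_eq _ _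
    _ ≤ γ := habs
    _ < δ := by linarith
end
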